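/- Let P_T > 0 and σ_Z² ≥ 0, and let D̄ satisfy v·(r·σ_Z² + (r−ρ²)·P_T)/(P_T + σ_Z²) ≤ D̄ ≤ v·r. Define E = (D̄/v)·(1 + σ_Z²/P_T) − r·σ_Z²/P_T. Then r − ρ² ≤ E ≤ r, and the encoder coefficient α* = −ρ/r + √((1−ρ²/r)(1/E − 1/r)) satisfies −ρ/r ≤ α* ≤ 0, Q(α*) = (r−ρ²)/E, and the noisy-channel privacy constraint with equality: v·( r·σ_Z²/(P_T + σ_Z²) + (r−ρ²)·P_T/(Q(α*)·(P_T + σ_Z²)) ) = D̄. -/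

import Mathlib

/-- `Q α = 1 + 2αρ + α²r`, the normalized second moment of `X + αθ` (divided by `v`). -/
noncomputable def Q (ρ r α : ℝ) : ℝ := 1 + 2 * α * ρ + α ^ 2 * r

/-- The auxiliary quantity `E = (D̄/v)(1 + σ_Z²/P_T) − r·σ_Z²/P_T` of the noisy-channel
setting. -/
noncomputable def Eaux (v r P σZ2 D : ℝ) : ℝ := (D / v) * (1 + σZ2 / P) - r * σZ2 / P

/-- Noisy-channel equilibrium (Theorem 4): for an admissible privacy level `D̄`, the quantity
`E` lies in `[r−ρ², r]`, and the encoder coefficient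
`α* = −ρ/r + √((1−ρ²/r)(1/E − 1/r))` lies in `[−ρ/r, 0]`, satisfies `Q(α*) = (r−ρ²)/E`, and
meets the noisy-channel privacy constraint with equality. -/
theorem noisy_channel_equilibrium (v ρ r P σZ2 D : ℝ)
    (hv : 0 < v) (hρ : 0 ≤ ρ) (hr : ρ ^ 2 < r)
    (hP : 0 < P) (hσ : 0 ≤ σZ2)
    (hD1 : v * (r * σZ2 + (r - ρ ^ 2) * P) / (P + σZ2) ≤ D) (hD2 : D ≤ v * r) :
    r - ρ ^ 2 ≤ Eaux v r P σZ2 D ∧ Eaux v r P σZ2 D ≤ r ∧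
    -ρ / r ≤ -ρ / r + Real.sqrt ((1 - ρ ^ 2 / r) * (1 / Eaux v r P σZ2 D - 1 / r)) ∧
    -ρ / r + Real.sqrt ((1 - ρ ^ 2 / r) * (1 / Eaux v r P σZ2 D - 1 / r)) ≤ 0 ∧
    Q ρ r (-ρ / r + Real.sqrt ((1 - ρ ^ 2 / r) * (1 / Eaux v r P σZ2 D - 1 / r)))
      = (r - ρ ^ 2) / Eaux v r P σZ2 D ∧
    v * (r * σZ2 / (P + σZ2) +
          (r - ρ ^ 2) * P /
            (Q ρ r (-ρ / r + Real.sqrt ((1 - ρ ^ 2 / r) * (1 / Eaux v r P σZ2 D - 1 / r))) *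
              (P + σZ2))) = D := by
  have hr0 : 0 < r := lt_of_le_of_lt (sq_nonneg ρ) hr
  have hPσ : 0 < P + σZ2 := by linarith
  have hEeq : Eaux v r P σZ2 D = (D * (P + σZ2) - v * r * σZ2) / (v * P) := by
    unfold Eaux; field_simp
  have h1 : v * (r * σZ2 + (r - ρ ^ 2) * P) ≤ D * (P + σZ2) :=
    (div_le_iff₀ hPσ).mp hD1
  have hvP : 0 < v * P := mul_pos hv hP
  have hE1 : r - ρ ^ 2 ≤ Eaux v r P σZ2 D := by
    rw [hEeq, le_div_iff₀ hvP]; nlinarith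
  have hE2 : Eaux v r P σZ2 D ≤ r := by
    rw [hEeq, div_le_iff₀ hvP]; nlinarith
  set E := Eaux v r P σZ2 D with hE
  have hE0 : 0 < E := by nlinarith
  have hrad : 0 ≤ (1 - ρ ^ 2 / r) * (1 / E - 1 / r) := by
    apply mul_nonneg
    · rw [sub_nonneg, div_le_one hr0]; linarith
    · rw [sub_nonneg]; exact one_div_le_one_div_of_le hE0 hE2
  set s := Real.sqrt ((1 - ρ ^ 2 / r) * (1 / E - 1 / r)) with hs
  have hs0 : 0 ≤ s := Real.sqrt_nonneg _
  have hs2 : s ^ 2 = (1 - ρ ^ 2 / r) * (1 / E - 1 / r) := Real.sq_sqrt hrad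
  have hE0' : E ≠ 0 := ne_of_gt hE0
  have hr0' : r ≠ 0 := ne_of_gt hr0
  have hs2' : s ^ 2 * (E * r ^ 2) = (r - ρ ^ 2) * (r - E) := by
    rw [hs2]; field_simp
  have hsle : s ≤ ρ / r := by
    have key : (1 - ρ ^ 2 / r) * (1 / E - 1 / r) ≤ (ρ / r) ^ 2 := by
      rw [div_pow, ← sub_nonneg]
      have heq : ρ ^ 2 / r ^ 2 - (1 - ρ ^ 2 / r) * (1 / E - 1 / r)
          = (E - (r - ρ ^ 2)) / (E * r) := by
        field_simp; ring
      rw [heq]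
      apply div_nonneg (by linarith) (by positivity)
    calc s ≤ Real.sqrt ((ρ / r) ^ 2) := Real.sqrt_le_sqrt key
    _ = ρ / r := Real.sqrt_sq (by positivity)
  have hQ : Q ρ r (-ρ / r + s) = (r - ρ ^ 2) / E := by
    unfold Q
    field_simp
    linear_combination hs2'
  have hle0 : -ρ / r + s ≤ 0 := by rw [neg_div]; linarith
  refine ⟨hE1, hE2, by linarith, hle0, hQ, ?_⟩
  rw [hQ]
  have hrρ : r - ρ ^ 2 ≠ 0 := by nlinarith
  rw [hEeq] at *
  field_simp
  ring
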